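/- Let α > 0 and λ be real numbers. Then for every z > 0, the derivative of the function z ↦ E_α(λ z^α) equals λ z^{α−1} E_{α,α}(λ z^α). -/

import Mathlib

open Filter Real Asymptotics

/-- Two-parameter Mittag-Leffler function `E_{α,β}(x) = ∑ₖ xᵏ / Γ(kα + β)`,
with the convention `1/Γ = 0` at the poles of `Γ` (in Mathlib, `Real.Gamma`
vanishes at nonpositive integers, so division by it gives `0` there). -/
noncomputable def mittagLeffler (a b x : ℝ) : ℝ := ∑' k : ℕ, x ^ k / Real.Gamma (k * a + b)

/-- Eventually, `Γ(y + α) ≥ C Γ(y)`. -/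
lemma gamma_ratio_eventually (α C : ℝ) (hα : 0 < α) :
    ∀ᶠ y in atTop, C * Real.Gamma y ≤ Real.Gamma (y + α) := by
  -- reduce to the case `C ≥ 1`
  have main : ∀ C' : ℝ, 1 ≤ C' → ∀ᶠ y in atTop, C' * Real.Gamma y ≤ Real.Gamma (y + α) := by
    intro C' hC'
    rcases le_or_gt 1 α with h1 | h1
    · filter_upwards [eventually_ge_atTop (1 : ℝ), eventually_ge_atTop C'] with y hy hyC
      have hy0 : (0 : ℝ) < y := lt_of_lt_of_le one_pos hy
      have hmono : Real.Gamma (y + 1) ≤ Real.Gamma (y + α) := by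
        rcases eq_or_lt_of_le h1 with h | h
        · rw [← h]
        · exact le_of_lt (Real.Gamma_strictMonoOn_Ici (by simp only [Set.mem_Ici]; linarith)
            (by simp only [Set.mem_Ici]; linarith) (by linarith))
      have hga := Real.Gamma_add_one (ne_of_gt hy0)
      have hGpos := Real.Gamma_pos_of_pos hy0
      nlinarith [hmono, hga, hGpos]
    · -- 0 < α < 1 : use log-convexity of Γ
      have hev : ∀ᶠ y : ℝ in atTop, 2 * C' ≤ y ^ α :=
        (tendsto_rpow_atTop hα).eventually_ge_atTop (2 * C')
      filter_upwards [eventually_ge_atTop (1 : ℝ), hev] with y hy hyC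
      have hy0 : (0 : ℝ) < y := lt_of_lt_of_le one_pos hy
      have hyα : (0 : ℝ) < y + α := by linarith
      have hG : 0 < Real.Gamma y := Real.Gamma_pos_of_pos hy0
      have hGα : 0 < Real.Gamma (y + α) := Real.Gamma_pos_of_pos hyα
      -- convexity inequality
      have hconv := Real.convexOn_log_Gamma.2 (Set.mem_Ioi.2 hyα)
        (Set.mem_Ioi.2 (by linarith : (0:ℝ) < y + α + 1)) (le_of_lt hα)
        (by linarith : (0:ℝ) ≤ 1 - α) (by ring)
      have hpt : α • (y + α) + (1 - α) • (y + α + 1) = y + 1 := by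
        simp only [smul_eq_mul]; ring
      rw [hpt] at hconv
      simp only [Function.comp, smul_eq_mul] at hconv
      have hga1 : Real.Gamma (y + α + 1) = (y + α) * Real.Gamma (y + α) :=
        Real.Gamma_add_one (ne_of_gt hyα)
      have hga2 : Real.Gamma (y + 1) = y * Real.Gamma y := Real.Gamma_add_one (ne_of_gt hy0)
      rw [hga1, hga2, Real.log_mul (ne_of_gt hyα) (ne_of_gt hGα),
        Real.log_mul (ne_of_gt hy0) (ne_of_gt hG)] at hconv
      have hlog : Real.log y + Real.log (Real.Gamma y)
          ≤ Real.log (Real.Gamma (y + α)) + (1 - α) * Real.log (y + α) := by nlinarith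
      -- exponentiate
      have hexp : y * Real.Gamma y ≤ Real.Gamma (y + α) * (y + α) ^ (1 - α) := by
        have h' := Real.exp_le_exp.2 hlog
        rwa [Real.exp_add, Real.exp_add, Real.exp_log hy0, Real.exp_log hG,
          Real.exp_log hGα, mul_comm ((1:ℝ) - α) (Real.log (y + α)),
          ← Real.rpow_def_of_pos hyα] at h'
      -- bound `(y+α)^(1-α) ≤ 2 * y^(1-α)`
      have hb1 : (y + α) ^ ((1:ℝ) - α) ≤ (2 * y) ^ ((1:ℝ) - α) :=
        Real.rpow_le_rpow (le_of_lt hyα) (by linarith) (by linarith)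
      have hb2 : (2 * y) ^ ((1:ℝ) - α) = 2 ^ ((1:ℝ) - α) * y ^ ((1:ℝ) - α) :=
        Real.mul_rpow (by norm_num) (le_of_lt hy0)
      have hb3 : (2:ℝ) ^ ((1:ℝ) - α) ≤ 2 := by
        calc (2:ℝ) ^ ((1:ℝ) - α) ≤ 2 ^ (1:ℝ) :=
              Real.rpow_le_rpow_of_exponent_le (by norm_num) (by linarith)
          _ = 2 := Real.rpow_one 2
      have hy1α : (0:ℝ) < y ^ ((1:ℝ) - α) := Real.rpow_pos_of_pos hy0 _
      have hb : (y + α) ^ ((1:ℝ) - α) ≤ 2 * y ^ ((1:ℝ) - α) := by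
        calc (y + α) ^ ((1:ℝ) - α) ≤ 2 ^ ((1:ℝ) - α) * y ^ ((1:ℝ) - α) := by
              rw [← hb2]; exact hb1
          _ ≤ 2 * y ^ ((1:ℝ) - α) := by nlinarith
      have hexp2 : y * Real.Gamma y ≤ Real.Gamma (y + α) * (2 * y ^ ((1:ℝ) - α)) := by
        calc y * Real.Gamma y ≤ Real.Gamma (y + α) * (y + α) ^ ((1:ℝ) - α) := hexp
          _ ≤ Real.Gamma (y + α) * (2 * y ^ ((1:ℝ) - α)) := by nlinarith
      have hysplit : y ^ α * y ^ ((1:ℝ) - α) = y := by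
        rw [← Real.rpow_add hy0]; norm_num
      have hyαpos : (0:ℝ) < y ^ α := Real.rpow_pos_of_pos hy0 _
      have hfin : 2 * C' * (y ^ ((1:ℝ) - α) * Real.Gamma y)
          ≤ y ^ α * (y ^ ((1:ℝ) - α) * Real.Gamma y) :=
        mul_le_mul_of_nonneg_right hyC (by positivity)
      nlinarith [hexp2, hysplit, hfin]
  rcases le_or_gt C 1 with h | h
  · filter_upwards [main 1 le_rfl, eventually_gt_atTop (0:ℝ)] with y h1 hy0
    have hG : 0 < Real.Gamma y := Real.Gamma_pos_of_pos hy0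
    nlinarith
  · exact main C (le_of_lt h)

/-- Summability of the weighted Mittag-Leffler-type series. -/
lemma summable_mittag_aux (α c : ℝ) (hα : 0 < α) (hc : 0 < c) (r : ℝ) :
    Summable (fun k : ℕ => ((k : ℝ) + 1) * r ^ k / Real.Gamma ((k : ℝ) * α + c)) := by
  apply summable_of_ratio_norm_eventually_le (r := 1 / 2) (by norm_num)
  have ht : Tendsto (fun k : ℕ => (k : ℝ) * α + c) atTop atTop :=
    tendsto_atTop_add_const_right _ c (tendsto_natCast_atTop_atTop.atTop_mul_const hα)
  filter_upwards [ht.eventually (gamma_ratio_eventually α (4 * (|r| + 1)) hα)] with k hk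
  have hkc : (0:ℝ) < (k : ℝ) * α + c := by positivity
  have hkc' : (0:ℝ) < ((k : ℝ) + 1) * α + c := by positivity
  have hG : 0 < Real.Gamma ((k : ℝ) * α + c) := Real.Gamma_pos_of_pos hkc
  have hG' : 0 < Real.Gamma (((k : ℝ) + 1) * α + c) := Real.Gamma_pos_of_pos hkc'
  have harg : ((k : ℝ) + 1) * α + c = ((k : ℝ) * α + c) + α := by ring
  have hk' : 4 * (|r| + 1) * Real.Gamma ((k : ℝ) * α + c)
      ≤ Real.Gamma (((k : ℝ) + 1) * α + c) := by rw [harg]; exact hk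
  have hnorm : ∀ m : ℕ, ‖((m : ℝ) + 1) * r ^ m / Real.Gamma ((m : ℝ) * α + c)‖
      = ((m : ℝ) + 1) * |r| ^ m / Real.Gamma ((m : ℝ) * α + c) := by
    intro m
    have hGm : 0 < Real.Gamma ((m : ℝ) * α + c) := Real.Gamma_pos_of_pos (by positivity)
    rw [Real.norm_eq_abs, abs_div, abs_mul, abs_pow, abs_of_pos hGm,
      abs_of_pos (by positivity : (0:ℝ) < (m : ℝ) + 1)]
  rw [hnorm, hnorm]
  push_cast
  rw [← mul_div_assoc, div_le_div_iff₀ hG' hG]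
  have hrnn : (0:ℝ) ≤ |r| := abs_nonneg r
  have hpnn : (0:ℝ) ≤ |r| ^ k := pow_nonneg hrnn k
  have step1 : ((k : ℝ) + 1 + 1) * |r| ^ (k + 1) * Real.Gamma ((k : ℝ) * α + c)
      = (((k : ℝ) + 2) * |r|) * (|r| ^ k * Real.Gamma ((k : ℝ) * α + c)) := by
    rw [pow_succ]; ring
  have step2 : ((k : ℝ) + 2) * |r| ≤ 2 * ((k : ℝ) + 1) * (|r| + 1) := by
    nlinarith [Nat.cast_nonneg (α := ℝ) k]
  calc ((k : ℝ) + 1 + 1) * |r| ^ (k + 1) * Real.Gamma ((k : ℝ) * α + c)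
      = (((k : ℝ) + 2) * |r|) * (|r| ^ k * Real.Gamma ((k : ℝ) * α + c)) := step1
    _ ≤ (2 * ((k : ℝ) + 1) * (|r| + 1)) * (|r| ^ k * Real.Gamma ((k : ℝ) * α + c)) :=
        mul_le_mul_of_nonneg_right step2 (by positivity)
    _ = 1 / 2 * (((k : ℝ) + 1) * |r| ^ k)
        * (4 * (|r| + 1) * Real.Gamma ((k : ℝ) * α + c)) := by ring
    _ ≤ 1 / 2 * (((k : ℝ) + 1) * |r| ^ k) * Real.Gamma (((k : ℝ) + 1) * α + c) :=
        mul_le_mul_of_nonneg_left hk' (by positivity)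

/-- Summability of the Mittag-Leffler series itself. -/
lemma summable_mittag (α c : ℝ) (hα : 0 < α) (hc : 0 < c) (x : ℝ) :
    Summable (fun k : ℕ => x ^ k / Real.Gamma ((k : ℝ) * α + c)) := by
  apply Summable.of_norm_bounded (summable_mittag_aux α c hα hc |x|)
  intro k
  have hG : 0 < Real.Gamma ((k : ℝ) * α + c) := Real.Gamma_pos_of_pos (by positivity)
  rw [Real.norm_eq_abs, abs_div, abs_pow, abs_of_pos hG, div_eq_mul_inv, div_eq_mul_inv]
  refine mul_le_mul_of_nonneg_right ?_ (inv_nonneg.2 hG.le)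
  nlinarith [pow_nonneg (abs_nonneg x) k, Nat.cast_nonneg (α := ℝ) k]

theorem mittagLeffler_one_deriv
    (α lam : ℝ) (hα : 0 < α) :
    ∀ z > (0 : ℝ),
      deriv (fun z : ℝ => mittagLeffler α 1 (lam * z ^ α)) z
        = lam * z ^ (α - 1) * mittagLeffler α α (lam * z ^ α) := by
  intro z hz
  set B : ℝ := z + 1 with hB
  have hB0 : (0:ℝ) < B := by positivity
  set g : ℕ → ℝ → ℝ := fun k w => (lam * w ^ α) ^ k / Real.Gamma ((k : ℝ) * α + 1) with hg_def
  set g' : ℕ → ℝ → ℝ := fun k w =>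
    lam ^ k * ((α * (k : ℝ)) * w ^ (α * (k : ℝ) - 1)) / Real.Gamma ((k : ℝ) * α + 1)
    with hg'_def
  set u : ℕ → ℝ := fun k =>
    (2 / z * α) * (((k : ℝ) + 1) * (|lam| * B ^ α) ^ k / Real.Gamma ((k : ℝ) * α + 1))
    with hu_def
  have hzt : z ∈ Set.Ioo (z / 2) (z + 1) := ⟨by linarith, by linarith⟩
  -- derivatives of the terms
  have hg : ∀ (k : ℕ) (w : ℝ), w ∈ Set.Ioo (z / 2) (z + 1) → HasDerivAt (g k) (g' k w) w := by
    intro k w hw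
    have hw0 : 0 < w := lt_trans (by linarith) hw.1
    have heq : (fun x : ℝ => lam ^ k * x ^ (α * (k : ℝ)) / Real.Gamma ((k : ℝ) * α + 1))
        =ᶠ[nhds w] g k := by
      filter_upwards [isOpen_Ioi.mem_nhds (Set.mem_Ioi.2 hw0)] with x hx
      have hx0 : (0:ℝ) < x := hx
      simp only [hg_def]
      rw [mul_pow, Real.rpow_mul (le_of_lt hx0), Real.rpow_natCast]
    have h1 : HasDerivAt (fun x : ℝ => x ^ (α * (k : ℝ)))
        ((α * (k : ℝ)) * w ^ (α * (k : ℝ) - 1)) w :=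
      Real.hasDerivAt_rpow_const (Or.inl (ne_of_gt hw0))
    have hd : HasDerivAt
        (fun x : ℝ => lam ^ k * x ^ (α * (k : ℝ)) / Real.Gamma ((k : ℝ) * α + 1))
        (g' k w) w := (h1.const_mul (lam ^ k)).div_const _
    exact hd.congr_of_eventuallyEq heq.symm
  -- norm bound on the derivatives
  have hgB : ∀ (k : ℕ) (w : ℝ), w ∈ Set.Ioo (z / 2) (z + 1) → ‖g' k w‖ ≤ u k := by
    intro k w hw
    have hw0 : 0 < w := lt_trans (by linarith) hw.1
    have hG : 0 < Real.Gamma ((k : ℝ) * α + 1) := Real.Gamma_pos_of_pos (by positivity)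
    have hαk : (0:ℝ) ≤ α * (k : ℝ) := by positivity
    have hwkpos : (0:ℝ) < w ^ (α * (k : ℝ) - 1) := Real.rpow_pos_of_pos hw0 _
    have hnum : |lam| ^ k * ((α * (k : ℝ)) * w ^ (α * (k : ℝ) - 1))
        ≤ 2 / z * α * (((k : ℝ) + 1) * (|lam| * B ^ α) ^ k) := by
      have hwsub : w ^ (α * (k : ℝ) - 1) = w ^ (α * (k : ℝ)) / w := by
        rw [Real.rpow_sub hw0, Real.rpow_one]
      have hwB : w ^ (α * (k : ℝ)) ≤ B ^ (α * (k : ℝ)) :=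
        Real.rpow_le_rpow (le_of_lt hw0) (le_of_lt hw.2) hαk
      have hBk : B ^ (α * (k : ℝ)) = (B ^ α) ^ k := by
        rw [Real.rpow_mul (le_of_lt hB0), Real.rpow_natCast]
      have hinv : 1 / w ≤ 2 / z := by
        rw [div_le_div_iff₀ hw0 hz]
        linarith [hw.1]
      have hBαpos : (0:ℝ) < B ^ α := Real.rpow_pos_of_pos hB0 _
      have key : w ^ (α * (k : ℝ) - 1) ≤ (B ^ α) ^ k * (2 / z) := by
        rw [hwsub, div_eq_mul_one_div]
        calc w ^ (α * (k : ℝ)) * (1 / w) ≤ (B ^ α) ^ k * (1 / w) :=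
              mul_le_mul_of_nonneg_right (by rw [← hBk]; exact hwB) (by positivity)
          _ ≤ (B ^ α) ^ k * (2 / z) := mul_le_mul_of_nonneg_left hinv (by positivity)
      calc |lam| ^ k * ((α * (k : ℝ)) * w ^ (α * (k : ℝ) - 1))
          ≤ |lam| ^ k * ((α * (k : ℝ)) * ((B ^ α) ^ k * (2 / z))) := by
            refine mul_le_mul_of_nonneg_left ?_ (by positivity)
            exact mul_le_mul_of_nonneg_left key (by positivity)
        _ = 2 / z * α * ((k : ℝ) * (|lam| ^ k * (B ^ α) ^ k)) := by ring
        _ ≤ 2 / z * α * (((k : ℝ) + 1) * (|lam| ^ k * (B ^ α) ^ k)) := by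
            refine mul_le_mul_of_nonneg_left ?_ (by positivity)
            exact mul_le_mul_of_nonneg_right (by linarith) (by positivity)
        _ = 2 / z * α * (((k : ℝ) + 1) * (|lam| * B ^ α) ^ k) := by rw [mul_pow]
    simp only [hg'_def, hu_def]
    rw [Real.norm_eq_abs, abs_div, abs_of_pos hG, abs_mul, abs_pow,
      abs_of_nonneg (by positivity : (0:ℝ) ≤ (α * (k : ℝ)) * w ^ (α * (k : ℝ) - 1)),
      div_eq_mul_inv, ← mul_div_assoc, div_eq_mul_inv]
    exact mul_le_mul_of_nonneg_right hnum (inv_nonneg.2 hG.le)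
  -- summability of the bounds and of the series at `z`
  have hu : Summable u :=
    (summable_mittag_aux α 1 hα one_pos (|lam| * B ^ α)).mul_left (2 / z * α)
  have hg0 : Summable fun k => g k z := by
    simp only [hg_def]
    exact summable_mittag α 1 hα one_pos (lam * z ^ α)
  have Hd : HasDerivAt (fun w => ∑' k, g k w) (∑' k, g' k z) z :=
    hasDerivAt_tsum_of_isPreconnected hu isOpen_Ioo isPreconnected_Ioo hg hgB hzt hg0 hzt
  have hfun : (fun w : ℝ => mittagLeffler α 1 (lam * w ^ α)) = fun w => ∑' k, g k w := by
    funext w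
    simp only [mittagLeffler, hg_def]
  rw [hfun, Hd.deriv]
  -- compute the sum of derivatives
  have hsum' : Summable fun k => g' k z :=
    Summable.of_norm_bounded hu fun k => hgB k z hzt
  rw [Summable.tsum_eq_zero_add hsum']
  have h0 : g' 0 z = 0 := by simp [hg'_def]
  rw [h0, zero_add]
  have hterm : ∀ k : ℕ, g' (k + 1) z
      = lam * z ^ (α - 1) * ((lam * z ^ α) ^ k / Real.Gamma ((k : ℝ) * α + α)) := by
    intro k
    have hd0 : (0:ℝ) < (k : ℝ) * α + α := by positivity
    have hGα : 0 < Real.Gamma ((k : ℝ) * α + α) := Real.Gamma_pos_of_pos hd0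
    have hΓ : Real.Gamma ((↑(k + 1) : ℝ) * α + 1)
        = ((k : ℝ) * α + α) * Real.Gamma ((k : ℝ) * α + α) := by
      have harg : (↑(k + 1) : ℝ) * α + 1 = ((k : ℝ) * α + α) + 1 := by push_cast; ring
      rw [harg, Real.Gamma_add_one (ne_of_gt hd0)]
    have hexp : α * (↑(k + 1) : ℝ) - 1 = α * (k : ℝ) + (α - 1) := by push_cast; ring
    have hzsplit : z ^ (α * (↑(k + 1) : ℝ) - 1) = z ^ (α * (k : ℝ)) * z ^ (α - 1) := by
      rw [hexp, Real.rpow_add hz]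
    have hpow : (lam * z ^ α) ^ k = lam ^ k * z ^ (α * (k : ℝ)) := by
      rw [mul_pow, Real.rpow_mul (le_of_lt hz), Real.rpow_natCast]
    have hcast : (↑(k + 1) : ℝ) = (k : ℝ) + 1 := by push_cast; ring
    simp only [hg'_def]
    rw [hzsplit, hΓ, hpow, hcast]
    field_simp
    ring
  rw [tsum_congr hterm, tsum_mul_left, mittagLeffler]
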